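/- For every integer a, the equation x^3 + y^3 + 2*z^3 = a has a solution in the 2-adic integers Z_2. -/

import Mathlib

lemma odd_is_cube (n : ℤ) (hn : Odd n) : ∃ x : ℤ_[2], x ^ 3 = (n : ℤ_[2]) := by
  set F : Polynomial ℤ_[2] := Polynomial.X ^ 3 - Polynomial.C (n : ℤ_[2]) with hF
  have hd : F.derivative = Polynomial.C 3 * Polynomial.X ^ 2 := by
    simp [hF, Polynomial.derivative_pow]
  have hderiv : ‖F.derivative.eval (n : ℤ_[2])‖ = 1 := by
    rw [hd]
    simp only [Polynomial.eval_mul, Polynomial.eval_C, Polynomial.eval_pow, Polynomial.eval_X]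
    have hcast : (3 : ℤ_[2]) * (n : ℤ_[2]) ^ 2 = ((3 * n ^ 2 : ℤ) : ℤ_[2]) := by push_cast; ring
    rw [hcast]
    have hle : ‖((3 * n ^ 2 : ℤ) : ℤ_[2])‖ ≤ 1 := PadicInt.norm_le_one _
    have hnlt : ¬ ‖((3 * n ^ 2 : ℤ) : ℤ_[2])‖ < 1 := by
      rw [PadicInt.norm_int_lt_one_iff_dvd]
      intro h
      have he : Even (3 * n ^ 2) := even_iff_two_dvd.mpr h
      rw [Int.even_mul, Int.even_pow] at he
      rcases he with h3 | ⟨hne, -⟩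
      · exact (by decide : ¬ Even (3:ℤ)) h3
      · exact (Int.not_even_iff_odd.mpr hn) hne
    linarith
  have heval : ‖F.eval (n : ℤ_[2])‖ < 1 := by
    have : F.eval (n : ℤ_[2]) = ((n ^ 3 - n : ℤ) : ℤ_[2]) := by push_cast [hF]; simp
    rw [this, PadicInt.norm_int_lt_one_iff_dvd]
    obtain ⟨k, hk⟩ := hn
    exact ⟨(2*k^3+3*k^2+k)*2, by rw [hk]; ring⟩
  obtain ⟨z, hz, -⟩ := hensels_lemma (F := F) (a := (n : ℤ_[2])) (by rw [Polynomial.coe_aeval_eq_eval, hderiv]; simpa using heval)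
  refine ⟨z, ?_⟩
  have := hz
  simp [hF, sub_eq_zero] at this
  exact this

theorem stmt_10 (a : ℤ) :
    ∃ x y z : ℤ_[2], x ^ 3 + y ^ 3 + 2 * z ^ 3 = (a : ℤ_[2]) := by
  rcases Int.even_or_odd a with he | ho
  · obtain ⟨x, hx⟩ := odd_is_cube (a - 1) (by rcases he with ⟨k, hk⟩; exact ⟨k-1, by omega⟩)
    exact ⟨x, 1, 0, by rw [hx]; push_cast; ring⟩
  · obtain ⟨x, hx⟩ := odd_is_cube a ho
    exact ⟨x, 0, 0, by rw [hx]; ring⟩
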